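/- Let G_n = P_n □ C_4. Then the sequence n ↦ R_{G_n}[(a_1,b_1),(a_n,b_3)] is strictly increasing: R_{G_{n+1}}[(a_1,b_1),(a_{n+1},b_3)] > R_{G_n}[(a_1,b_1),(a_n,b_3)] for all n ≥ 2. -/

import Mathlib

open Matrix Finset

open Classical in
/-- The Moore–Penrose pseudoinverse of a real square matrix, defined via the
four Penrose conditions (it is unique when it exists). -/
noncomputable def Matrix.mpinv {m : Type*} [Fintype m] [DecidableEq m]
    (A : Matrix m m ℝ) : Matrix m m ℝ :=
  if h : ∃ B : Matrix m m ℝ,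
      A * B * A = A ∧ B * A * B = B ∧ (A * B)ᵀ = A * B ∧ (B * A)ᵀ = B * A
  then h.choose else 0

/-- Effective resistance between `u` and `v` with respect to a (weighted)
Laplacian matrix `L`:  `(e_u - e_v)ᵀ L⁺ (e_u - e_v)`. -/
noncomputable def effRes {m : Type*} [Fintype m] [DecidableEq m]
    (L : Matrix m m ℝ) (u v : m) : ℝ :=
  (Pi.single u 1 - Pi.single v 1) ⬝ᵥ (L.mpinv *ᵥ (Pi.single u 1 - Pi.single v 1))

/-- The (real) Laplacian matrix of a simple graph. -/
noncomputable def lapm {V : Type*} [Fintype V] [DecidableEq V]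
    (G : SimpleGraph V) : Matrix V V ℝ :=
  letI := Classical.decRel G.Adj
  G.lapMatrix ℝ

/-- Resistance distance between two vertices of a simple graph. -/
noncomputable def resDist {V : Type*} [Fintype V] [DecidableEq V]
    (G : SimpleGraph V) (u v : V) : ℝ :=
  effRes (lapm G) u v

/-- Resistance diameter of a simple graph. -/
noncomputable def resDiam {V : Type*} [Fintype V] [DecidableEq V]
    (G : SimpleGraph V) : ℝ :=
  ⨆ p : V × V, resDist G p.1 p.2

/-- The weighted Laplacian of the cone over `G` with apex `Sum.inr ()`:
edges of `G` have conductance `1` (unit resistance), and each vertex of `G`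
is joined to the apex by an edge of conductance `m` (resistance `1/m`). -/
noncomputable def coneLap {V : Type*} [Fintype V] [DecidableEq V]
    (G : SimpleGraph V) (m : ℝ) : Matrix (V ⊕ Unit) (V ⊕ Unit) ℝ :=
  letI := Classical.decRel G.Adj
  let W : Matrix (V ⊕ Unit) (V ⊕ Unit) ℝ := fun i j =>
    match i, j with
    | Sum.inl a, Sum.inl b => if G.Adj a b then 1 else 0
    | Sum.inl _, Sum.inr _ => m
    | Sum.inr _, Sum.inl _ => m
    | Sum.inr _, Sum.inr _ => 0
  Matrix.of fun i j => (if i = j then ∑ k, W i k else 0) - W i j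

/-- The `k`-dimensional hypercube graph `Q_k`. -/
def hypercube (k : ℕ) : SimpleGraph (Fin k → Bool) where
  Adj x y := (Finset.univ.filter fun i => x i ≠ y i).card = 1
  symm := by
    constructor
    intro x y h
    rw [← h]
    congr 1
    ext i
    simp [ne_comm]
  loopless := by constructor; intro x; simp

/-- The join `G + H` of two graphs on disjoint vertex sets. -/
def graphJoin {V W : Type*} (G : SimpleGraph V) (H : SimpleGraph W) :
    SimpleGraph (V ⊕ W) where
  Adj x y :=
    match x, y with
    | Sum.inl a, Sum.inl b => G.Adj a b
    | Sum.inr a, Sum.inr b => H.Adj a b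
    | Sum.inl _, Sum.inr _ => True
    | Sum.inr _, Sum.inl _ => True
  symm := by
    constructor
    rintro (a | a) (b | b) h
    · exact G.adj_symm h
    · trivial
    · trivial
    · exact H.adj_symm h
  loopless := by
    constructor
    rintro (a | a) h
    · exact G.loopless.irrefl a h
    · exact H.loopless.irrefl a h


lemma pinv_unique {m : Type*} [Fintype m] [DecidableEq m] (A B C : Matrix m m ℝ)
    (hB : A * B * A = A ∧ B * A * B = B ∧ (A * B)ᵀ = A * B ∧ (B * A)ᵀ = B * A)
    (hC : A * C * A = A ∧ C * A * C = C ∧ (A * C)ᵀ = A * C ∧ (C * A)ᵀ = C * A) :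
    B = C := by
  obtain ⟨hB1, hB2, hB3, hB4⟩ := hB
  obtain ⟨hC1, hC2, hC3, hC4⟩ := hC
  have hAB : A * B = A * C := by
    calc A * B = (A * B)ᵀ := hB3.symm
    _ = Bᵀ * Aᵀ := transpose_mul _ _
    _ = Bᵀ * (A * C * A)ᵀ := by rw [hC1]
    _ = Bᵀ * (Aᵀ * (A * C)ᵀ) := by rw [transpose_mul]
    _ = (Bᵀ * Aᵀ) * (A * C) := by rw [hC3]; simp [mul_assoc]
    _ = (A * B)ᵀ * (A * C) := by rw [transpose_mul]
    _ = (A * B) * (A * C) := by rw [hB3]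
    _ = (A * B * A) * C := by simp [mul_assoc]
    _ = A * C := by rw [hB1]
  have hBA : B * A = C * A := by
    calc B * A = (B * A)ᵀ := hB4.symm
    _ = Aᵀ * Bᵀ := transpose_mul _ _
    _ = (A * (C * A))ᵀ * Bᵀ := by rw [← mul_assoc, hC1]
    _ = ((C * A)ᵀ * Aᵀ) * Bᵀ := by rw [transpose_mul]
    _ = (C * A) * (Aᵀ * Bᵀ) := by rw [hC4]; simp [mul_assoc]
    _ = (C * A) * (B * A)ᵀ := by rw [transpose_mul]
    _ = (C * A) * (B * A) := by rw [hB4]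
    _ = C * (A * B * A) := by simp [mul_assoc]
    _ = C * A := by rw [hB1]
  calc B = B * A * B := hB2.symm
  _ = C * A * B := by rw [hBA]
  _ = C * (A * B) := by simp [mul_assoc]
  _ = C * (A * C) := by rw [hAB]
  _ = C * A * C := by simp [mul_assoc]
  _ = C := hC2


section key
variable {V : Type*} [Fintype V] [DecidableEq V] (G : SimpleGraph V)

lemma lapm_symm : (lapm G)ᵀ = lapm G := by
  letI := Classical.decRel G.Adj
  exact G.isSymm_lapMatrix (R := ℝ)

lemma lapm_mulVec_const : lapm G *ᵥ (fun _ => (1:ℝ)) = 0 := by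
  letI := Classical.decRel G.Adj
  exact G.lapMatrix_mulVec_const_eq_zero

lemma lapm_posSemidef : (lapm G).PosSemidef := by
  letI := Classical.decRel G.Adj
  exact SimpleGraph.posSemidef_lapMatrix ℝ G

lemma lapm_dot_nonneg (x : V → ℝ) : 0 ≤ x ⬝ᵥ (lapm G *ᵥ x) := by
  have := (lapm_posSemidef G).re_dotProduct_nonneg x
  simpa using this

lemma lapm_dot_eq_zero {x : V → ℝ} (hG : G.Preconnected)
    (h : x ⬝ᵥ (lapm G *ᵥ x) = 0) (i j : V) : x i = x j := by
  letI := Classical.decRel G.Adj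
  have h2 : Matrix.toLinearMap₂' ℝ (G.lapMatrix ℝ) x x = 0 := by
    rw [Matrix.toLinearMap₂'_apply']; exact h
  exact (G.lapMatrix_toLinearMap₂'_apply'_eq_zero_iff_forall_reachable x).mp h2 i j (hG i j)
end key



lemma mpinv_eq_of_conds {m : Type*} [Fintype m] [DecidableEq m] (A B : Matrix m m ℝ)
    (hB : A * B * A = A ∧ B * A * B = B ∧ (A * B)ᵀ = A * B ∧ (B * A)ᵀ = B * A) :
    A.mpinv = B := by
  have h : ∃ B : Matrix m m ℝ,
      A * B * A = A ∧ B * A * B = B ∧ (A * B)ᵀ = A * B ∧ (B * A)ᵀ = B * A := ⟨B, hB⟩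
  unfold Matrix.mpinv
  rw [dif_pos h]
  exact pinv_unique A _ B h.choose_spec hB

theorem effRes_eq_of_potential {V : Type*} [Fintype V] [DecidableEq V] [Nonempty V]
    (L : Matrix V V ℝ)
    (hLsym : Lᵀ = L) (hL1 : L *ᵥ (fun _ => (1:ℝ)) = 0)
    (hpsd : ∀ x : V → ℝ, 0 ≤ x ⬝ᵥ (L *ᵥ x))
    (hker : ∀ x : V → ℝ, x ⬝ᵥ (L *ᵥ x) = 0 → ∀ i j, x i = x j)
    (u v : V) (y : V → ℝ)
    (hy : L *ᵥ y = Pi.single u 1 - Pi.single v 1) :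
    effRes L u v = y u - y v := by
  classical
  set m : ℝ := (Fintype.card V : ℝ) with hm_def
  have hm : 0 < m := by positivity
  set J : Matrix V V ℝ := Matrix.of (fun _ _ => (1:ℝ)) with hJ_def
  have hJsym : Jᵀ = J := by ext i j; rfl
  have hLJ : L * J = 0 := by
    ext i j
    simp only [Matrix.mul_apply, Matrix.zero_apply]
    have := congrFun hL1 i
    simpa [Matrix.mulVec, dotProduct, hJ_def] using this
  have hJL : J * L = 0 := by
    have := congrArg Matrix.transpose hLJ
    rw [Matrix.transpose_mul, hJsym, hLsym] at this
    simpa using this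
  have hJJ : J * J = m • J := by
    ext i j
    simp [Matrix.mul_apply, hJ_def, hm_def]
  set K : Matrix V V ℝ := L + m⁻¹ • J with hK_def
  -- kernel of K is trivial
  have hKker : ∀ x : V → ℝ, K *ᵥ x = 0 → x = 0 := by
    intro x hx
    have hJx : J *ᵥ x = fun _ => ∑ k, x k := by
      ext i; simp [Matrix.mulVec, dotProduct, hJ_def]
    have h0 : x ⬝ᵥ (K *ᵥ x) = 0 := by rw [hx]; simp
    have hexp : x ⬝ᵥ (K *ᵥ x) = x ⬝ᵥ (L *ᵥ x) + m⁻¹ * (∑ k, x k)^2 := by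
      rw [hK_def, Matrix.add_mulVec, dotProduct_add, Matrix.smul_mulVec,
        dotProduct_smul, hJx]
      simp [dotProduct, Finset.sum_mul, sq, smul_eq_mul, mul_comm]
    have hnn1 : 0 ≤ x ⬝ᵥ (L *ᵥ x) := hpsd x
    have hnn2 : 0 ≤ m⁻¹ * (∑ k, x k)^2 := by positivity
    have hLx0 : x ⬝ᵥ (L *ᵥ x) = 0 := by nlinarith [hexp ▸ h0]
    have hsum0 : (∑ k, x k) = 0 := by
      have : m⁻¹ * (∑ k, x k)^2 = 0 := by nlinarith [hexp ▸ h0]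
      have h2 : (∑ k, x k)^2 = 0 := by
        rcases mul_eq_zero.mp this with h | h
        · exact absurd h (inv_ne_zero (ne_of_gt hm))
        · exact h
      exact pow_eq_zero_iff (by norm_num) |>.mp h2
    have hconst := hker x hLx0
    ext i
    have : ∀ j, x j = x i := fun j => hconst j i
    have hsum : (∑ k, x k) = m * x i := by
      rw [Finset.sum_congr rfl (fun j _ => this j)]
      simp [hm_def, mul_comm]
    have : m * x i = 0 := by rw [← hsum]; exact hsum0
    have := mul_eq_zero.mp this
    simp only [Pi.zero_apply]
    rcases this with h | h
    · exact absurd h (ne_of_gt hm)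
    · exact h
  have hdet : IsUnit K.det := by
    by_contra hd
    have : K.det = 0 := by
      rcases eq_or_ne K.det 0 with h | h
      · exact h
      · exact absurd (isUnit_iff_ne_zero.mpr h) hd
    obtain ⟨x, hx0, hx⟩ := (Matrix.exists_mulVec_eq_zero_iff).mpr this
    exact hx0 (hKker x hx)
  have hKK : K * K⁻¹ = 1 := Matrix.mul_nonsing_inv K hdet
  have hKK' : K⁻¹ * K = 1 := Matrix.nonsing_inv_mul K hdet
  have hKJ : K * J = J := by
    rw [hK_def, Matrix.add_mul, Matrix.smul_mul, hLJ, hJJ, smul_smul,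
      inv_mul_cancel₀ (ne_of_gt hm)]
    simp
  have hJK : J * K = J := by
    rw [hK_def, Matrix.mul_add, Matrix.mul_smul, hJL, hJJ, smul_smul,
      inv_mul_cancel₀ (ne_of_gt hm)]
    simp
  have hK'J : K⁻¹ * J = J := by
    calc K⁻¹ * J = K⁻¹ * (K * J) := by rw [hKJ]
    _ = (K⁻¹ * K) * J := by rw [mul_assoc]
    _ = J := by rw [hKK']; simp
  have hJK' : J * K⁻¹ = J := by
    calc J * K⁻¹ = (J * K) * K⁻¹ := by rw [hJK]
    _ = J * (K * K⁻¹) := by rw [mul_assoc]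
    _ = J := by rw [hKK]; simp
  set B : Matrix V V ℝ := K⁻¹ - m⁻¹ • J with hB_def
  have hLK : L = K - m⁻¹ • J := by rw [hK_def]; abel
  have hJB : J * B = 0 := by
    rw [hB_def, Matrix.mul_sub, Matrix.mul_smul, hJK', hJJ, smul_smul,
      inv_mul_cancel₀ (ne_of_gt hm)]
    simp
  have hBJ : B * J = 0 := by
    rw [hB_def, Matrix.sub_mul, Matrix.smul_mul, hK'J, hJJ, smul_smul,
      inv_mul_cancel₀ (ne_of_gt hm)]
    simp
  have hLB : L * B = 1 - m⁻¹ • J := by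
    rw [hLK, Matrix.sub_mul, Matrix.smul_mul, hJB, smul_zero, sub_zero,
      hB_def, Matrix.mul_sub, hKK, Matrix.mul_smul, hKJ]
  have hBL : B * L = 1 - m⁻¹ • J := by
    rw [hLK, Matrix.mul_sub, Matrix.mul_smul, hBJ, smul_zero, sub_zero,
      hB_def, Matrix.sub_mul, hKK', Matrix.smul_mul, hJK]
  have hconds : L * B * L = L ∧ B * L * B = B ∧ (L * B)ᵀ = L * B ∧ (B * L)ᵀ = B * L := by
    refine ⟨?_, ?_, ?_, ?_⟩
    · rw [hLB, Matrix.sub_mul, Matrix.smul_mul, hJL]; simp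
    · rw [mul_assoc, hLB, Matrix.mul_sub, Matrix.mul_smul, hBJ]; simp
    · rw [hLB, Matrix.transpose_sub, Matrix.transpose_smul, hJsym, Matrix.transpose_one]
    · rw [hBL, Matrix.transpose_sub, Matrix.transpose_smul, hJsym, Matrix.transpose_one]
  have hmp : L.mpinv = B := mpinv_eq_of_conds L B hconds
  -- now compute
  set w : V → ℝ := Pi.single u 1 - Pi.single v 1 with hw_def
  have hsumw : ∑ k, w k = 0 := by
    simp [hw_def, Finset.sum_sub_distrib, Finset.sum_pi_single]
  have hJw : J *ᵥ w = 0 := by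
    ext i; simp [Matrix.mulVec, dotProduct, hJ_def, hsumw]
  set c : ℝ := m⁻¹ * (∑ k, y k) with hc_def
  set x : V → ℝ := fun i => y i - c with hx_def
  have hsumx : ∑ k, x k = 0 := by
    simp only [hx_def, Finset.sum_sub_distrib, Finset.sum_const, Finset.card_univ,
      nsmul_eq_mul, hc_def, hm_def]
    field_simp
    ring
  have hJx : J *ᵥ x = 0 := by
    ext i
    simp only [Matrix.mulVec, dotProduct, hJ_def, Matrix.of_apply, one_mul, Pi.zero_apply]
    exact hsumx
  have hLx : L *ᵥ x = w := by
    have : x = y - c • (fun _ => (1:ℝ)) := by ext i; simp [hx_def, smul_eq_mul]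
    rw [this, Matrix.mulVec_sub, Matrix.mulVec_smul, hL1, hy]
    simp [hw_def]
  have hKx : K *ᵥ x = w := by
    rw [hK_def, Matrix.add_mulVec, hLx, Matrix.smul_mulVec, hJx]
    simp
  have hKinvw : K⁻¹ *ᵥ w = x := by
    rw [← hKx, Matrix.mulVec_mulVec, hKK']
    simp
  have : effRes L u v = w ⬝ᵥ (B *ᵥ w) := by rw [effRes, hmp]
  rw [this, hB_def, Matrix.sub_mulVec, Matrix.smul_mulVec, hJw, hKinvw]
  simp only [smul_zero, sub_zero]
  rw [hw_def]
  rw [sub_dotProduct, single_dotProduct, single_dotProduct]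
  simp [hx_def]


open Classical in
lemma lapm_mulVec {V : Type*} [Fintype V] [DecidableEq V] (G : SimpleGraph V)
    (y : V → ℝ) (v : V) :
    (lapm G *ᵥ y) v = ∑ w, if G.Adj v w then y v - y w else 0 := by
  letI := Classical.decRel G.Adj
  rw [lapm]
  rw [SimpleGraph.lapMatrix_mulVec_apply]
  rw [SimpleGraph.degree_eq_sum_if_adj (R := ℝ)]
  rw [Finset.sum_mul]
  have : ∑ u ∈ G.neighborFinset v, y u = ∑ w, if G.Adj v w then y w else 0 := by
    rw [← Finset.sum_filter]
    congr 1
    ext w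
    simp [SimpleGraph.mem_neighborFinset]
  rw [this, ← Finset.sum_sub_distrib]
  congr 1; ext w
  split_ifs <;> simp

open Classical in
lemma lapm_boxProd_mulVec {A B : Type*} [Fintype A] [DecidableEq A] [Fintype B] [DecidableEq B]
    (G : SimpleGraph A) (H : SimpleGraph B) (y : A × B → ℝ) (i : A) (b : B) :
    (lapm (G.boxProd H) *ᵥ y) (i, b)
      = (lapm G *ᵥ fun j => y (j, b)) i + (lapm H *ᵥ fun c => y (i, c)) b := by
  rw [lapm_mulVec, lapm_mulVec, lapm_mulVec]
  rw [Fintype.sum_prod_type]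
  have key : ∀ (j : A) (c : B),
      (if (G.boxProd H).Adj (i, b) (j, c) then y (i, b) - y (j, c) else 0)
      = (if G.Adj i j ∧ c = b then y (i, b) - y (j, c) else 0)
        + (if H.Adj b c ∧ j = i then y (i, b) - y (j, c) else 0) := by
    intro j c
    rw [SimpleGraph.boxProd_adj]
    rcases Classical.em (G.Adj i j ∧ c = b) with h1 | h1 <;>
      rcases Classical.em (H.Adj b c ∧ j = i) with h2 | h2
    · obtain ⟨-, rfl⟩ := h1
      exact absurd h2.1 (H.irrefl)
    · rw [if_pos (Or.inl ⟨h1.1, h1.2.symm⟩), if_pos h1, if_neg h2]; ring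
    · rw [if_pos (Or.inr ⟨h2.1, h2.2.symm⟩), if_neg h1, if_pos h2]; ring
    · rw [if_neg, if_neg h1, if_neg h2]
      · ring
      · rintro (⟨ha, hb⟩ | ⟨ha, hb⟩)
        · exact h1 ⟨ha, hb.symm⟩
        · exact h2 ⟨ha, hb.symm⟩
  simp_rw [key, Finset.sum_add_distrib]
  congr 1
  · refine Finset.sum_congr rfl fun j _ => ?_
    by_cases h : G.Adj i j
    · simp only [h, true_and]
      rw [Finset.sum_ite_eq' Finset.univ b (fun c => y (i, b) - y (j, c))]
      simp
    · simp [h]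
  · rw [Finset.sum_comm]
    refine Finset.sum_congr rfl fun c _ => ?_
    by_cases h : H.Adj b c
    · simp only [h, true_and]
      rw [Finset.sum_ite_eq' Finset.univ i (fun j => y (i, b) - y (j, c))]
      simp
    · simp [h]

open Classical in
lemma lapm_pathGraph_mulVec (N : ℕ) (f : Fin N → ℝ) (i : Fin N) :
    (lapm (SimpleGraph.pathGraph N) *ᵥ f) i
      = (if h : i.val + 1 < N then f i - f ⟨i.val + 1, h⟩ else 0)
        + (if h : 0 < i.val then f i - f ⟨i.val - 1, lt_of_le_of_lt (Nat.sub_le _ _) i.isLt⟩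
           else 0) := by
  rw [lapm_mulVec]
  have key : ∀ j : Fin N, (if (SimpleGraph.pathGraph N).Adj i j then f i - f j else 0)
      = (if i.val + 1 = j.val then f i - f j else 0)
        + (if j.val + 1 = i.val then f i - f j else 0) := by
    intro j
    have hadj := SimpleGraph.pathGraph_adj (n := N) (u := i) (v := j)
    rcases Classical.em (i.val + 1 = j.val) with h1 | h1 <;>
      rcases Classical.em (j.val + 1 = i.val) with h2 | h2
    · omega
    · rw [if_pos (hadj.mpr (Or.inl h1)), if_pos h1, if_neg h2]; ring
    · rw [if_pos (hadj.mpr (Or.inr h2)), if_neg h1, if_pos h2]; ring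
    · rw [if_neg, if_neg h1, if_neg h2]
      · ring
      · intro hc; rcases hadj.mp hc with h | h; exact h1 h; exact h2 h
  simp_rw [key, Finset.sum_add_distrib]
  congr 1
  · by_cases h : i.val + 1 < N
    · rw [dif_pos h]
      rw [Finset.sum_eq_single (⟨i.val + 1, h⟩ : Fin N)]
      · rw [if_pos rfl]
      · intro j _ hne
        rw [if_neg]
        intro hc
        exact hne (Fin.ext hc.symm)
      · intro hc; exact absurd (Finset.mem_univ _) hc
    · rw [dif_neg h]
      apply Finset.sum_eq_zero
      intro j _
      rw [if_neg]
      have := j.isLt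
      omega
  · by_cases h : 0 < i.val
    · rw [dif_pos h]
      rw [Finset.sum_eq_single (⟨i.val - 1, lt_of_le_of_lt (Nat.sub_le _ _) i.isLt⟩ : Fin N)]
      · rw [if_pos (by simp; omega)]
      · intro j _ hne
        rw [if_neg]
        intro hc
        apply hne
        apply Fin.ext
        simp
        omega
      · intro hc; exact absurd (Finset.mem_univ _) hc
    · rw [dif_neg h]
      apply Finset.sum_eq_zero
      intro j _
      rw [if_neg]
      omega

def sv : Fin 4 → ℝ := ![1, 0, -1, 0]
def tv : Fin 4 → ℝ := ![1, -1, 1, -1]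

lemma lapm_cycle4 (g : Fin 4 → ℝ) (b : Fin 4) :
    (lapm (SimpleGraph.cycleGraph 4) *ᵥ g) b = 2 * g b - g (b + 1) - g (b + 3) := by
  rw [lapm_mulVec, Fin.sum_univ_four]
  fin_cases b <;> simp only [Fin.zero_eta, Fin.mk_one, Fin.reduceFinMk, Fin.isValue]
  · rw [if_neg (by decide : ¬ (SimpleGraph.cycleGraph 4).Adj 0 0),
        if_pos (by decide : (SimpleGraph.cycleGraph 4).Adj 0 1),
        if_neg (by decide : ¬ (SimpleGraph.cycleGraph 4).Adj 0 2),
        if_pos (by decide : (SimpleGraph.cycleGraph 4).Adj 0 3)]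
    show _ = 2 * g 0 - g (0 + 1) - g (0 + 3)
    norm_num; ring
  · rw [if_pos (by decide : (SimpleGraph.cycleGraph 4).Adj 1 0),
        if_neg (by decide : ¬ (SimpleGraph.cycleGraph 4).Adj 1 1),
        if_pos (by decide : (SimpleGraph.cycleGraph 4).Adj 1 2),
        if_neg (by decide : ¬ (SimpleGraph.cycleGraph 4).Adj 1 3)]
    show _ = 2 * g 1 - g (1 + 1) - g (1 + 3)
    norm_num
    show g 1 - g 0 + (g 1 - g 2) = 2 * g 1 - g 2 - g (0 : Fin 4)
    ring
  · rw [if_neg (by decide : ¬ (SimpleGraph.cycleGraph 4).Adj 2 0),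
        if_pos (by decide : (SimpleGraph.cycleGraph 4).Adj 2 1),
        if_neg (by decide : ¬ (SimpleGraph.cycleGraph 4).Adj 2 2),
        if_pos (by decide : (SimpleGraph.cycleGraph 4).Adj 2 3)]
    show _ = 2 * g 2 - g (2 + 1) - g (2 + 3)
    norm_num
    show g 2 - g 1 + (g 2 - g 3) = 2 * g 2 - g 3 - g (1 : Fin 4)
    ring
  · rw [if_pos (by decide : (SimpleGraph.cycleGraph 4).Adj 3 0),
        if_neg (by decide : ¬ (SimpleGraph.cycleGraph 4).Adj 3 1),
        if_pos (by decide : (SimpleGraph.cycleGraph 4).Adj 3 2),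
        if_neg (by decide : ¬ (SimpleGraph.cycleGraph 4).Adj 3 3)]
    show _ = 2 * g 3 - g (3 + 1) - g (3 + 3)
    norm_num
    show g 3 - g 0 + (g 3 - g 2) = 2 * g 3 - g (0 : Fin 4) - g (2 : Fin 4)
    ring


lemma lapm_cycle4_sv (x : ℝ) (b : Fin 4) :
    (lapm (SimpleGraph.cycleGraph 4) *ᵥ fun c => sv c * x) b = 2 * sv b * x := by
  rw [lapm_cycle4]
  fin_cases b <;> simp [sv] <;> ring

lemma lapm_cycle4_tv (x : ℝ) (b : Fin 4) :
    (lapm (SimpleGraph.cycleGraph 4) *ᵥ fun c => tv c * x) b = 4 * tv b * x := by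
  rw [lapm_cycle4]
  fin_cases b <;> simp [tv] <;> ring

lemma lapm_cycle4_const (x : ℝ) (b : Fin 4) :
    (lapm (SimpleGraph.cycleGraph 4) *ᵥ fun _ => x) b = 0 := by
  rw [lapm_mulVec, Fin.sum_univ_four]
  simp


noncomputable def rc : ℝ := 2 - Real.sqrt 3
noncomputable def sc : ℝ := 3 - 2 * Real.sqrt 2
noncomputable def DD (N : ℕ) : ℝ := (1 - rc) - (1 - 3*rc) * rc^(N-1)
noncomputable def EE (N : ℕ) : ℝ := (1 - sc) + (1 - 5*sc) * sc^(N-1)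
noncomputable def al (N i : ℕ) : ℝ := ((N:ℝ) - 1 - (i:ℝ))/4
noncomputable def be (N i : ℕ) : ℝ := (rc^(i+1) + rc^(N-i)) / (2 * DD N)
noncomputable def ga (N i : ℕ) : ℝ := (sc^(i+1) - sc^(N-i)) / (4 * EE N)

lemma sqrt3_bounds : 1.73 < Real.sqrt 3 ∧ Real.sqrt 3 < 1.74 := by
  constructor
  · rw [show (1.73:ℝ) = Real.sqrt (1.73^2) from (Real.sqrt_sq (by norm_num)).symm]
    apply Real.sqrt_lt_sqrt <;> norm_num
  · rw [show (1.74:ℝ) = Real.sqrt (1.74^2) from (Real.sqrt_sq (by norm_num)).symm]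
    apply Real.sqrt_lt_sqrt <;> norm_num

lemma sqrt2_bounds : 1.41 < Real.sqrt 2 ∧ Real.sqrt 2 < 1.415 := by
  constructor
  · rw [show (1.41:ℝ) = Real.sqrt (1.41^2) from (Real.sqrt_sq (by norm_num)).symm]
    apply Real.sqrt_lt_sqrt <;> norm_num
  · rw [show (1.415:ℝ) = Real.sqrt (1.415^2) from (Real.sqrt_sq (by norm_num)).symm]
    apply Real.sqrt_lt_sqrt <;> norm_num

lemma rc_bounds : 0.26 < rc ∧ rc < 0.27 := by
  have h := sqrt3_bounds; unfold rc; constructor <;> nlinarith [h.1, h.2]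

lemma sc_bounds : 0.17 < sc ∧ sc < 0.18 := by
  have h := sqrt2_bounds; unfold sc; constructor <;> nlinarith [h.1, h.2]

lemma rc_sq : rc^2 = 4*rc - 1 := by
  unfold rc
  have : Real.sqrt 3 ^ 2 = 3 := Real.sq_sqrt (by norm_num)
  nlinarith [this]

lemma sc_sq : sc^2 = 6*sc - 1 := by
  unfold sc
  have : Real.sqrt 2 ^ 2 = 2 := Real.sq_sqrt (by norm_num)
  nlinarith [this]

lemma rc_pow_le (N : ℕ) (hN : 2 ≤ N) : rc^(N-1) ≤ rc := by
  have h := rc_bounds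
  calc rc^(N-1) ≤ rc^1 := pow_le_pow_of_le_one (by linarith [h.1]) (by linarith [h.2]) (by omega)
  _ = rc := pow_one rc

lemma sc_pow_le (N : ℕ) (hN : 2 ≤ N) : sc^(N-1) ≤ sc := by
  have h := sc_bounds
  calc sc^(N-1) ≤ sc^1 := pow_le_pow_of_le_one (by linarith [h.1]) (by linarith [h.2]) (by omega)
  _ = sc := pow_one sc

lemma DD_pos (N : ℕ) (hN : 2 ≤ N) : 0 < DD N := by
  have h := rc_bounds
  have h1 := rc_pow_le N hN
  have h2 : 0 < rc^(N-1) := pow_pos (by linarith [h.1]) _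
  unfold DD
  nlinarith [h.1, h.2]

lemma EE_pos (N : ℕ) (hN : 2 ≤ N) : 0 < EE N := by
  have h := sc_bounds
  have h2 : 0 < sc^(N-1) := pow_pos (by linarith [h.1]) _
  unfold EE
  nlinarith [h.1, h.2]

lemma F2 (N : ℕ) (hN : 2 ≤ N) (i : Fin N) :
    (lapm (SimpleGraph.pathGraph N) *ᵥ fun j => be N j.val) i + 2 * be N i.val
      = (if i.val = 0 then (1:ℝ)/2 else 0) + (if i.val = N - 1 then (1:ℝ)/2 else 0) := by
  have hD := (DD_pos N hN).ne'
  rw [lapm_pathGraph_mulVec]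
  by_cases h0 : i.val = 0
  · rw [dif_pos (by omega : i.val + 1 < N), dif_neg (by omega), if_pos h0, if_neg (by omega)]
    simp only [h0, Fin.val_mk, Nat.sub_zero]
    have key : 3*(rc^(0+1) + rc^N) - (rc^(0+1+1) + rc^(N-(0+1))) = DD N := by
      rw [show N = (N-1)+1 by omega]
      rw [show (N-1)+1-(0+1) = N-1 by omega, pow_succ]
      unfold DD
      rw [show (N-1)+1-1 = N-1 by omega]
      linear_combination -rc_sq
    unfold be
    field_simp
    linear_combination key
  · by_cases h1 : i.val = N - 1
    · rw [dif_neg (by omega), dif_pos (by omega : 0 < i.val), if_neg h0, if_pos h1]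
      simp only [h1, Fin.val_mk]
      have key : 3*(rc^(N-1+1) + rc^(N-(N-1))) - (rc^(N-1-1+1) + rc^(N-(N-1-1))) = DD N := by
        rw [show N-1+1 = (N-1)+1 from rfl, show N-(N-1) = 1 by omega,
            show N-1-1+1 = N-1 by omega, show N-(N-1-1) = 2 by omega, pow_succ]
        unfold DD
        linear_combination -rc_sq
      unfold be
      field_simp
      linear_combination key
    · rw [dif_pos (by omega : i.val + 1 < N), dif_pos (by omega : 0 < i.val),
          if_neg h0, if_neg h1]
      simp only [Fin.val_mk]
      unfold be
      obtain ⟨l, hl⟩ : ∃ l, (i:ℕ) = l + 1 := ⟨i.val - 1, by omega⟩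
      obtain ⟨m, hm⟩ : ∃ m, N - (i:ℕ) = m + 1 := ⟨N - i.val - 1, by omega⟩
      rw [hl]
      rw [show N - (l+1+1) = m by omega, show N - (l+1-1) = m+2 by omega,
          show N - (l+1) = m+1 by omega, show l+1-1+1 = l+1 by omega,
          show l+1+1+1 = l+3 by omega, show l+1+1 = l+2 by omega]
      have key : 4*(rc^(l+2) + rc^(m+1)) - (rc^(l+3) + rc^m) - (rc^(l+1) + rc^(m+2)) = 0 := by
        linear_combination (-(rc^(l+1)) - rc^m) * rc_sq
      have pack : ((rc^(l+2) + rc^(m+1))/(2*DD N) - (rc^(l+3) + rc^m)/(2*DD N))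
          + ((rc^(l+2) + rc^(m+1))/(2*DD N) - (rc^(l+1) + rc^(m+2))/(2*DD N))
          + 2*((rc^(l+2) + rc^(m+1))/(2*DD N))
          = (4*(rc^(l+2) + rc^(m+1)) - (rc^(l+3) + rc^m) - (rc^(l+1) + rc^(m+2)))/(2*DD N) := by
        ring
      rw [pack, key, zero_div]
      norm_num

lemma F1 (N : ℕ) (hN : 2 ≤ N) (i : Fin N) :
    (lapm (SimpleGraph.pathGraph N) *ᵥ fun j => al N j.val) i
      = (if i.val = 0 then (1:ℝ)/4 else 0) - (if i.val = N - 1 then (1:ℝ)/4 else 0) := by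
  rw [lapm_pathGraph_mulVec]
  by_cases h0 : i.val = 0
  · rw [dif_pos (by omega : i.val + 1 < N), dif_neg (by omega), if_pos h0, if_neg (by omega)]
    simp only [h0, Fin.val_mk]
    unfold al
    push_cast
    ring
  · by_cases h1 : i.val = N - 1
    · rw [dif_neg (by omega), dif_pos (by omega : 0 < i.val), if_neg h0, if_pos h1]
      simp only [h1, Fin.val_mk]
      rw [show N-1-1 = N-2 by omega]
      unfold al
      rw [Nat.cast_sub (by omega : 1 ≤ N), Nat.cast_sub (by omega : 2 ≤ N)]
      push_cast
      ring
    · rw [dif_pos (by omega : i.val + 1 < N), dif_pos (by omega : 0 < i.val),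
          if_neg h0, if_neg h1]
      simp only [Fin.val_mk]
      unfold al
      rw [Nat.cast_sub (by omega : 1 ≤ i.val)]
      push_cast
      ring

lemma F3 (N : ℕ) (hN : 2 ≤ N) (i : Fin N) :
    (lapm (SimpleGraph.pathGraph N) *ᵥ fun j => ga N j.val) i + 4 * ga N i.val
      = (if i.val = 0 then (1:ℝ)/4 else 0) - (if i.val = N - 1 then (1:ℝ)/4 else 0) := by
  have hE := (EE_pos N hN).ne'
  rw [lapm_pathGraph_mulVec]
  by_cases h0 : i.val = 0
  · rw [dif_pos (by omega : i.val + 1 < N), dif_neg (by omega), if_pos h0, if_neg (by omega)]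
    simp only [h0, Fin.val_mk, Nat.sub_zero]
    have key : 5*(sc^(0+1) - sc^N) - (sc^(0+1+1) - sc^(N-(0+1))) = EE N := by
      rw [show N = (N-1)+1 by omega]
      rw [show (N-1)+1-(0+1) = N-1 by omega, pow_succ]
      unfold EE
      rw [show (N-1)+1-1 = N-1 by omega]
      linear_combination -sc_sq
    unfold ga
    field_simp
    linear_combination key
  · by_cases h1 : i.val = N - 1
    · rw [dif_neg (by omega), dif_pos (by omega : 0 < i.val), if_neg h0, if_pos h1]
      simp only [h1, Fin.val_mk]
      have key : 5*(sc^(N-1+1) - sc^(N-(N-1))) - (sc^(N-1-1+1) - sc^(N-(N-1-1))) = -EE N := by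
        rw [show N-(N-1) = 1 by omega,
            show N-1-1+1 = N-1 by omega, show N-(N-1-1) = 2 by omega, pow_succ]
        unfold EE
        linear_combination sc_sq
      unfold ga
      field_simp
      linear_combination key
    · rw [dif_pos (by omega : i.val + 1 < N), dif_pos (by omega : 0 < i.val),
          if_neg h0, if_neg h1]
      simp only [Fin.val_mk]
      unfold ga
      obtain ⟨l, hl⟩ : ∃ l, (i:ℕ) = l + 1 := ⟨i.val - 1, by omega⟩
      obtain ⟨m, hm⟩ : ∃ m, N - (i:ℕ) = m + 1 := ⟨N - i.val - 1, by omega⟩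
      rw [hl]
      rw [show N - (l+1+1) = m by omega, show N - (l+1-1) = m+2 by omega,
          show N - (l+1) = m+1 by omega, show l+1-1+1 = l+1 by omega,
          show l+1+1+1 = l+3 by omega, show l+1+1 = l+2 by omega]
      have key : 6*(sc^(l+2) - sc^(m+1)) - (sc^(l+3) - sc^m) - (sc^(l+1) - sc^(m+2)) = 0 := by
        linear_combination (sc^m - sc^(l+1)) * sc_sq
      have pack : ((sc^(l+2) - sc^(m+1))/(4*EE N) - (sc^(l+3) - sc^m)/(4*EE N))
          + ((sc^(l+2) - sc^(m+1))/(4*EE N) - (sc^(l+1) - sc^(m+2))/(4*EE N))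
          + 4*((sc^(l+2) - sc^(m+1))/(4*EE N))
          = (6*(sc^(l+2) - sc^(m+1)) - (sc^(l+3) - sc^m) - (sc^(l+1) - sc^(m+2)))/(4*EE N) := by
        ring
      rw [pack, key, zero_div]
      norm_num

lemma sv_0 : sv 0 = 1 := rfl
lemma sv_1 : sv 1 = 0 := rfl
lemma sv_2 : sv 2 = -1 := rfl
lemma sv_3 : sv 3 = 0 := rfl
lemma tv_0 : tv 0 = 1 := rfl
lemma tv_1 : tv 1 = -1 := rfl
lemma tv_2 : tv 2 = 1 := rfl
lemma tv_3 : tv 3 = -1 := rfl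

theorem resDist_eq_of_potential {V : Type*} [Fintype V] [DecidableEq V] [Nonempty V]
    {G : SimpleGraph V} (hG : G.Preconnected) (u v : V) (y : V → ℝ)
    (hy : lapm G *ᵥ y = Pi.single u 1 - Pi.single v 1) :
    resDist G u v = y u - y v :=
  effRes_eq_of_potential (lapm G) (lapm_symm G) (lapm_mulVec_const G) (lapm_dot_nonneg G)
    (fun x hx i j => lapm_dot_eq_zero G hG hx i j) u v y hy

noncomputable def pot (N : ℕ) : Fin N × Fin 4 → ℝ :=
  fun p => al N p.1.val + sv p.2 * be N p.1.val + tv p.2 * ga N p.1.val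

lemma bt_pos (N : ℕ) (hN : 2 ≤ N) : 0 < N := by omega
lemma bt_lt (N : ℕ) (hN : 2 ≤ N) : N - 1 < N := by omega

lemma pot_is_potential (N : ℕ) (hN : 2 ≤ N) :
    lapm ((SimpleGraph.pathGraph N).boxProd (SimpleGraph.cycleGraph 4)) *ᵥ pot N
      = Pi.single ((⟨0, bt_pos N hN⟩ : Fin N), (0 : Fin 4)) 1
        - Pi.single ((⟨N - 1, bt_lt N hN⟩ : Fin N), (2 : Fin 4)) 1 := by
  funext p
  obtain ⟨i, b⟩ := p
  rw [lapm_boxProd_mulVec]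
  have hsplit : (fun j => pot N (j, b))
      = (fun j : Fin N => al N j.val) + sv b • (fun j : Fin N => be N j.val)
        + tv b • (fun j : Fin N => ga N j.val) := by
    funext j; simp [pot, smul_eq_mul]
  have hsplit2 : (fun c => pot N (i, c))
      = (fun _ : Fin 4 => al N i.val) + (fun c => sv c * be N i.val)
        + (fun c => tv c * ga N i.val) := by
    funext c; simp [pot]
  rw [hsplit, hsplit2]
  rw [Matrix.mulVec_add, Matrix.mulVec_add, Matrix.mulVec_smul, Matrix.mulVec_smul,
      Matrix.mulVec_add, Matrix.mulVec_add]
  simp only [Pi.add_apply, Pi.smul_apply, smul_eq_mul]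
  rw [lapm_cycle4_const, lapm_cycle4_sv, lapm_cycle4_tv]
  have h1 := F1 N hN i
  have h2 := F2 N hN i
  have h3 := F3 N hN i
  have e2 : (lapm (SimpleGraph.pathGraph N) *ᵥ fun j => be N j.val) i
      = ((if i.val = 0 then (1:ℝ)/2 else 0) + (if i.val = N - 1 then (1:ℝ)/2 else 0))
        - 2 * be N i.val := by linarith
  have e3 : (lapm (SimpleGraph.pathGraph N) *ᵥ fun j => ga N j.val) i
      = ((if i.val = 0 then (1:ℝ)/4 else 0) - (if i.val = N - 1 then (1:ℝ)/4 else 0))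
        - 4 * ga N i.val := by linarith
  rw [h1, e2, e3]
  have hsingle1 : (Pi.single ((⟨0, by omega⟩ : Fin N), (0 : Fin 4)) (1:ℝ) : Fin N × Fin 4 → ℝ) (i, b)
      = if i.val = 0 ∧ b = 0 then 1 else 0 := by
    rw [Pi.single_apply]
    congr 1
    simp only [Prod.ext_iff, Fin.ext_iff, Fin.val_mk]
  have hsingle2 : (Pi.single ((⟨N - 1, by omega⟩ : Fin N), (2 : Fin 4)) (1:ℝ) : Fin N × Fin 4 → ℝ) (i, b)
      = if i.val = N - 1 ∧ b = 2 then 1 else 0 := by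
    rw [Pi.single_apply]
    congr 1
    simp [Prod.ext_iff, Fin.ext_iff]
  simp only [Pi.sub_apply]
  rw [hsingle1, hsingle2]
  have hne : ¬(i.val = 0 ∧ i.val = N - 1) := by omega
  fin_cases b <;>
    simp only [Fin.zero_eta, Fin.mk_one, Fin.reduceFinMk, Fin.reduceEq, Fin.isValue,
      sv_0, sv_1, sv_2, sv_3, tv_0, tv_1, tv_2, tv_3,
      and_true, and_false, if_false, ite_false] <;>
    split_ifs <;>
    first
      | (exfalso; omega)
      | ring
      | norm_num
      | norm_num [Matrix.cons_val_two, Matrix.cons_val_three, Matrix.vecHead, Matrix.vecTail]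

lemma resDist_formula (N : ℕ) (hN : 2 ≤ N) (u v : Fin N) (hu : u.val = 0) (hv : v.val = N - 1) :
    resDist ((SimpleGraph.pathGraph N).boxProd (SimpleGraph.cycleGraph 4)) (u, 0) (v, 2)
      = ((N:ℝ) - 1)/4 + (rc + rc^N)/DD N + (sc - sc^N)/(2*EE N) := by
  have hu' : u = ⟨0, by omega⟩ := Fin.ext hu
  have hv' : v = ⟨N - 1, by omega⟩ := Fin.ext hv
  rw [hu', hv']
  haveI : Nonempty (Fin N × Fin 4) := ⟨(⟨0, by omega⟩, 0)⟩
  have hpc : (SimpleGraph.pathGraph N).Connected := by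
    have := SimpleGraph.pathGraph_connected (N - 1)
    rwa [show N - 1 + 1 = N by omega] at this
  have hcc : (SimpleGraph.cycleGraph 4).Connected := SimpleGraph.cycleGraph_connected
  have hpre : ((SimpleGraph.pathGraph N).boxProd (SimpleGraph.cycleGraph 4)).Preconnected :=
    (hpc.boxProd hcc).preconnected
  rw [resDist_eq_of_potential hpre _ _ (pot N) (pot_is_potential N hN)]
  have hD := (DD_pos N hN).ne'
  have hE := (EE_pos N hN).ne'
  unfold pot
  simp only [sv_0, tv_0, sv_2, tv_2]
  unfold al be ga
  simp only [Fin.val_mk, Nat.sub_zero]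
  rw [show N - 1 + 1 = N by omega, show N - (N-1) = 1 by omega,
      Nat.cast_sub (by omega : 1 ≤ N)]
  push_cast
  field_simp
  ring

lemma T2_bounds (N : ℕ) (hN : 2 ≤ N) :
    (1 - rc)/2 ≤ (rc + rc^N)/DD N ∧ (rc + rc^N)/DD N ≤ 1/2 := by
  have hD := DD_pos N hN
  have hrb := rc_bounds
  have hrr := rc_sq
  have hp0 : 0 < rc^(N-1) := pow_pos (by linarith [hrb.1]) _
  have hp1 : rc^(N-1) ≤ rc := rc_pow_le N hN
  have hpow : rc^N = rc^(N-1) * rc := by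
    rw [show N = (N-1)+1 by omega, pow_succ, show (N-1)+1-1 = N-1 by omega]
  have hDD : DD N = (1-rc) - (1-3*rc)*rc^(N-1) := rfl
  constructor
  · rw [le_div_iff₀ hD, hDD, hpow]
    nlinarith [hrr, hp0, hp1, hrb.1, hrb.2, mul_nonneg hp0.le (by nlinarith [hrb.1, hrb.2] : (0:ℝ) ≤ rc + (1-rc)*(1-3*rc)/2)]
  · rw [div_le_iff₀ hD, hDD, hpow]
    nlinarith [hrr, hp0, hp1, hrb.1, hrb.2, mul_nonneg (sub_nonneg.mpr hp1) (by nlinarith [hrb.2] : (0:ℝ) ≤ 1 - rc)]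

lemma T3_bounds (N : ℕ) (hN : 2 ≤ N) :
    1/12 ≤ (sc - sc^N)/(2*EE N) ∧ (sc - sc^N)/(2*EE N) ≤ (1 - sc)/8 := by
  have hE := EE_pos N hN
  have hsb := sc_bounds
  have hss := sc_sq
  have hq0 : 0 < sc^(N-1) := pow_pos (by linarith [hsb.1]) _
  have hq1 : sc^(N-1) ≤ sc := sc_pow_le N hN
  have hpow : sc^N = sc^(N-1) * sc := by
    rw [show N = (N-1)+1 by omega, pow_succ, show (N-1)+1-1 = N-1 by omega]
  have hEE : EE N = (1-sc) + (1-5*sc)*sc^(N-1) := rfl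
  have h2E : 0 < 2 * EE N := by linarith
  constructor
  · rw [le_div_iff₀ h2E, hEE, hpow]
    nlinarith [hss, hq0, hq1, hsb.1, hsb.2, mul_nonneg (sub_nonneg.mpr hq1) (by nlinarith [hsb.1] : (0:ℝ) ≤ 1 + sc)]
  · rw [div_le_iff₀ h2E, hEE, hpow]
    nlinarith [hss, hq0, hq1, hsb.1, hsb.2, mul_nonneg hq0.le (by nlinarith [hsb.1, hsb.2] : (0:ℝ) ≤ (1-sc)*(1-5*sc) + 4*sc)]


/-- In the block tower graphs `G_n = P_n □ C_4`, the resistance distance between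
`(a_1,b_1)` and `(a_n,b_3)` is strictly increasing in `n`. -/
theorem resDist_blockTower_strictMono (n : ℕ) (hn : 2 ≤ n) :
    resDist ((SimpleGraph.pathGraph (n + 1)).boxProd (SimpleGraph.cycleGraph 4))
        (⟨0, by omega⟩, 0) (⟨n, by omega⟩, 2)
      > resDist ((SimpleGraph.pathGraph n).boxProd (SimpleGraph.cycleGraph 4))
          (⟨0, by omega⟩, 0) (⟨n - 1, by omega⟩, 2) := by
  rw [resDist_formula (n+1) (by omega) _ _ rfl (by simp),
      resDist_formula n hn _ _ rfl (by simp)]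
  have b2a := T2_bounds (n+1) (by omega)
  have b2b := T2_bounds n hn
  have b3a := T3_bounds (n+1) (by omega)
  have b3b := T3_bounds n hn
  have hrb := rc_bounds
  have hsb := sc_bounds
  have hcast : ((n+1:ℕ):ℝ) = (n:ℝ) + 1 := by push_cast; ring
  rw [hcast]
  linarith [b2a.1, b2b.2, b3a.1, b3b.2, hrb.1, hrb.2, hsb.1, hsb.2]
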